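/- Let A be a stochastic n×n real matrix such that the digraph on {1,…,n} with an edge from i to j iff i ≠ j and A_{ji} > 0 does NOT contain a spanning tree, and let 0 < τ̌ ≤ τ̂ be reals. Then for every sequence (h_k)_{k∈ℕ} with h_k ∈ [τ̌, τ̂] for all k, there exists an initial vector x0 ∈ ℝ^n such that the sequence P_q x0, where P_q = (e^{−h_{q−1}} I + (1 − e^{−h_{q−1}}) A) ⋯ (e^{−h_0} I + (1 − e^{−h_0}) A), does not converge to c·1 for any c ∈ ℝ; i.e., the synchronous system does not solve a consensus problem. -/
import Mathlib


open Filter Topology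

/-- Necessity of the spanning-tree condition for the synchronous system: if the digraph of
the stochastic matrix `A` does not contain a spanning tree, then for every admissible
sequence of update-interval lengths there is an initial state from which the iterates do
not converge to a consensus vector. -/
theorem synchronous_no_spanning_tree_no_consensus
    (n : ℕ) (hn : 1 ≤ n)
    (A : Matrix (Fin n) (Fin n) ℝ)
    (hnonneg : ∀ i j, 0 ≤ A i j)
    (hrow : ∀ i, ∑ j, A i j = 1)
    (hnospan : ¬ ∃ root : Fin n, ∀ v : Fin n,
      Relation.ReflTransGen (fun i j : Fin n => i ≠ j ∧ 0 < A j i) root v)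
    (τlo τhi : ℝ) (hτlo : 0 < τlo) (hττ : τlo ≤ τhi) :
    ∀ h : ℕ → ℝ, (∀ k, h k ∈ Set.Icc τlo τhi) →
      ∀ P : ℕ → Matrix (Fin n) (Fin n) ℝ,
        P 0 = 1 →
        (∀ q, P (q + 1) =
          (Real.exp (-h q) • (1 : Matrix (Fin n) (Fin n) ℝ)
            + (1 - Real.exp (-h q)) • A) * P q) →
        ∃ x0 : Fin n → ℝ, ¬ ∃ c : ℝ, ∀ i,
          Tendsto (fun q => (P q).mulVec x0 i) atTop (𝓝 c) := by
  classical
  intro h hh P hP0 hPrec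
  set E : Fin n → Fin n → Prop := fun i j => i ≠ j ∧ 0 < A j i with hEdef
  let R : Fin n → Fin n → Prop := fun i j => Relation.ReflTransGen E i j
  let B : Fin n → Finset (Fin n) := fun v => Finset.univ.filter fun w => R w v
  have hmemB : ∀ v w, w ∈ B v ↔ R w v := by intro v w; simp [B]
  have hself : ∀ v, v ∈ B v := fun v => (hmemB v v).2 Relation.ReflTransGen.refl
  have hsub : ∀ {u v : Fin n}, R u v → B u ⊆ B v := by
    intro u v huv w hw
    exact (hmemB v w).2 (((hmemB u w).1 hw).trans huv)
  obtain ⟨v1, -, hmin⟩ :=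
    Finset.exists_min_image (Finset.univ : Finset (Fin n)) (fun v => (B v).card)
      ⟨⟨0, hn⟩, Finset.mem_univ _⟩
  have hkey : ∀ u ∈ B v1, R v1 u := by
    intro u hu
    have h1 : B u ⊆ B v1 := hsub ((hmemB v1 u).1 hu)
    have h2 : (B v1).card ≤ (B u).card := hmin u (Finset.mem_univ u)
    have h3 : B u = B v1 := Finset.eq_of_subset_of_card_le h1 h2
    exact (hmemB u v1).1 (h3 ▸ hself v1)
  push_neg at hnospan
  obtain ⟨z, hz⟩ := hnospan v1
  have hz' : ¬ R v1 z := hz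
  have hdisj : ∀ u, u ∈ B v1 → u ∈ B z → False := fun u hu1 hu2 =>
    hz' ((hkey u hu1).trans ((hmemB z u).1 hu2))
  have hclos : ∀ v, ∀ i ∈ B v, ∀ j, j ≠ i → 0 < A i j → j ∈ B v := by
    intro v i hi j hne hpos
    exact (hmemB v j).2 (Relation.ReflTransGen.head ⟨hne, hpos⟩ ((hmemB v i).1 hi))
  -- the initial condition
  set x0 : Fin n → ℝ := fun j => if j ∈ B v1 then (1 : ℝ) else 0 with hx0
  refine ⟨x0, ?_⟩
  -- one step of the dynamics preserves constancy on predecessor-closed sets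
  have main : ∀ q (S : Finset (Fin n)), (∀ i ∈ S, ∀ j, j ≠ i → 0 < A i j → j ∈ S) →
      ∀ (c : ℝ) (y : Fin n → ℝ), (∀ j ∈ S, y j = c) → ∀ i ∈ S,
      ((Real.exp (-h q) • (1 : Matrix (Fin n) (Fin n) ℝ)
        + (1 - Real.exp (-h q)) • A).mulVec y) i = c := by
    intro q S hS c y hy i hi
    set M : Matrix (Fin n) (Fin n) ℝ :=
      Real.exp (-h q) • (1 : Matrix (Fin n) (Fin n) ℝ) + (1 - Real.exp (-h q)) • A with hM
    have hMzero : ∀ j, j ∉ S → M i j = 0 := by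
      intro j hj
      have hne : i ≠ j := fun hij => hj (hij ▸ hi)
      have hA : A i j = 0 := by
        by_contra hA0
        have : 0 < A i j := lt_of_le_of_ne (hnonneg i j) (Ne.symm hA0)
        exact hj (hS i hi j (Ne.symm hne) this)
      simp [hM, Matrix.add_apply, Matrix.smul_apply, Matrix.one_apply_ne hne, hA]
    have hMsum : ∑ j, M i j = 1 := by
      have h1 : ∑ j, (1 : Matrix (Fin n) (Fin n) ℝ) i j = 1 := by
        simp [Matrix.one_apply]
      simp only [hM, Matrix.add_apply, Matrix.smul_apply, smul_eq_mul, Finset.sum_add_distrib,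
        ← Finset.mul_sum, h1, hrow i]
      ring
    have hterm : ∀ j, M i j * y j = M i j * c := by
      intro j
      by_cases hj : j ∈ S
      · rw [hy j hj]
      · rw [hMzero j hj]; ring
    calc M.mulVec y i = ∑ j, M i j * y j := rfl
      _ = ∑ j, M i j * c := Finset.sum_congr rfl fun j _ => hterm j
      _ = (∑ j, M i j) * c := by rw [Finset.sum_mul]
      _ = c := by rw [hMsum, one_mul]
  -- the invariant
  have key : ∀ q, (∀ i ∈ B v1, (P q).mulVec x0 i = 1) ∧ (∀ i ∈ B z, (P q).mulVec x0 i = 0) := by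
    intro q
    induction q with
    | zero =>
      rw [hP0]
      constructor
      · intro i hi; rw [Matrix.one_mulVec]; simp [hx0, hi]
      · intro i hi
        rw [Matrix.one_mulVec]
        have : i ∉ B v1 := fun hi1 => hdisj i hi1 hi
        simp [hx0, this]
    | succ q ih =>
      rw [hPrec q]
      constructor
      · intro i hi
        rw [← Matrix.mulVec_mulVec]
        exact main q (B v1) (hclos v1) 1 _ ih.1 i hi
      · intro i hi
        rw [← Matrix.mulVec_mulVec]
        exact main q (B z) (hclos z) 0 _ ih.2 i hi
  rintro ⟨c, hc⟩
  have hc1 : c = 1 := by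
    have heq : (fun q => (P q).mulVec x0 v1) = fun _ => (1 : ℝ) :=
      funext fun q => (key q).1 v1 (hself v1)
    exact tendsto_nhds_unique (heq ▸ hc v1) tendsto_const_nhds
  have hc0 : c = 0 := by
    have heq : (fun q => (P q).mulVec x0 z) = fun _ => (0 : ℝ) :=
      funext fun q => (key q).2 z (hself z)
    exact tendsto_nhds_unique (heq ▸ hc z) tendsto_const_nhds
  exact one_ne_zero (hc1 ▸ hc0)
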